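/- Let r ∈ (2,3] and let S, M, R be real random variables in L^r on a common probability space with S = M + R, E(S²) = E(M²) (after rescaling), E(R) = 0. Let g be twice differentiable with g'(0)=g''(0)=0 and g'' being (r−2)-Hölder with constant 1. Then E(g(S) − g(M)) ≤ (1/(r−1)) ‖R‖_r ‖M‖_r^{r−1} + (1/2) ‖R‖_r² ‖M‖_r^{r−2} + ‖R‖_r^r. -/

import Mathlib

open MeasureTheory Filter intervalIntegral


/-- MVT-based bound: if `u a = 0` and `|u'| ≤ |· - a| ^ s`, then `|u| ≤ |· - a| ^ (s+1)`. -/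
lemma mvt_rpow_bound {u u' : ℝ → ℝ} (hu : ∀ x, HasDerivAt u (u' x) x) {a : ℝ} (ha : u a = 0)
    {s : ℝ} (hs : 0 < s) (hbd : ∀ x, |u' x| ≤ |x - a| ^ s) (x : ℝ) :
    |u x| ≤ |x - a| ^ (s + 1) := by
  rcases lt_trichotomy x a with h | h | h
  · obtain ⟨c, hc, hc'⟩ := exists_hasDerivAt_eq_slope u u' h
      (fun y _ => (hu y).continuousAt.continuousWithinAt) (fun y _ => hu y)
    have hax : (0:ℝ) < a - x := by linarith
    have hux : u x = -((a - x) * u' c) := by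
      rw [hc', ha]; field_simp; ring
    have hxa : |x - a| ≠ 0 := abs_ne_zero.mpr (sub_ne_zero.mpr h.ne)
    rw [hux, abs_neg, abs_mul]
    have h1 : |u' c| ≤ |x - a| ^ s := by
      refine (hbd c).trans ?_
      refine Real.rpow_le_rpow (abs_nonneg _) ?_ hs.le
      rw [abs_of_neg (by linarith [hc.2] : c - a < 0), abs_of_neg (by linarith : x - a < 0)]
      linarith [hc.1]
    calc |a - x| * |u' c| ≤ |x - a| * (|x - a| ^ s) := by
          refine mul_le_mul (le_of_eq (abs_sub_comm a x)) h1 (abs_nonneg _) (abs_nonneg _)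
      _ = |x - a| ^ (s + 1) := by rw [Real.rpow_add_one hxa]; ring
  · subst h
    simp only [ha, abs_zero, sub_self]
    rw [Real.zero_rpow (by linarith)]
  · obtain ⟨c, hc, hc'⟩ := exists_hasDerivAt_eq_slope u u' h
      (fun y _ => (hu y).continuousAt.continuousWithinAt) (fun y _ => hu y)
    have hax : (0:ℝ) < x - a := by linarith
    have hux : u x = (x - a) * u' c := by
      rw [hc', ha]; field_simp; ring
    have hxa : |x - a| ≠ 0 := abs_ne_zero.mpr (sub_ne_zero.mpr h.ne')
    rw [hux, abs_mul]
    have h1 : |u' c| ≤ |x - a| ^ s := by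
      refine (hbd c).trans ?_
      refine Real.rpow_le_rpow (abs_nonneg _) ?_ hs.le
      rw [abs_of_pos (by linarith [hc.1] : (0:ℝ) < c - a), abs_of_pos hax]
      linarith [hc.2]
    calc |x - a| * |u' c| ≤ |x - a| * (|x - a| ^ s) :=
          mul_le_mul_of_nonneg_left h1 (abs_nonneg _)
      _ = |x - a| ^ (s + 1) := by rw [Real.rpow_add_one hxa]; ring


lemma holder_deriv2_bound {r : ℝ} {g : ℝ → ℝ} (h0' : deriv (deriv g) 0 = 0)
    (hHolder : ∀ x y : ℝ, |deriv (deriv g) x - deriv (deriv g) y| ≤ |x - y| ^ (r - 2)) :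
    ∀ x : ℝ, |deriv (deriv g) x| ≤ |x| ^ (r - 2) := by
  intro x
  have := hHolder x 0
  simpa [h0'] using this

lemma holder_deriv2_continuous {r : ℝ} (hr2 : 2 < r) {g : ℝ → ℝ}
    (hHolder : ∀ x y : ℝ, |deriv (deriv g) x - deriv (deriv g) y| ≤ |x - y| ^ (r - 2)) :
    Continuous (deriv (deriv g)) := by
  rw [continuous_iff_continuousAt]
  intro x
  rw [ContinuousAt, tendsto_iff_dist_tendsto_zero]
  have h1 : Filter.Tendsto (fun y : ℝ => |y - x|) (nhds x) (nhds 0) := by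
    have : Continuous fun y : ℝ => |y - x| := continuous_abs.comp (continuous_id.sub continuous_const)
    simpa using this.tendsto x
  have h2 : Filter.Tendsto (fun y : ℝ => |y - x| ^ (r - 2)) (nhds x) (nhds 0) := by
    have hc : ContinuousAt (fun t : ℝ => t ^ (r - 2)) 0 :=
      Real.continuousAt_rpow_const 0 (r - 2) (Or.inr (by linarith))
    have := hc.tendsto.comp h1
    simpa [Function.comp_def, Real.zero_rpow (show r - 2 ≠ 0 by linarith)] using this
  refine squeeze_zero (fun y => dist_nonneg) (fun y => ?_) h2
  rw [Real.dist_eq]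
  exact hHolder y x

lemma holder_deriv1_bound {r : ℝ} (hr2 : 2 < r) {g : ℝ → ℝ}
    (hg' : Differentiable ℝ (deriv g)) (h0 : deriv g 0 = 0) (h0' : deriv (deriv g) 0 = 0)
    (hHolder : ∀ x y : ℝ, |deriv (deriv g) x - deriv (deriv g) y| ≤ |x - y| ^ (r - 2)) :
    ∀ a : ℝ, |deriv g a| ≤ |a| ^ (r - 1) / (r - 1) := by
  set g2 := deriv (deriv g) with hg2
  have cont2 : Continuous g2 := holder_deriv2_continuous hr2 hHolder
  have bd2 : ∀ x : ℝ, |g2 x| ≤ |x| ^ (r - 2) := holder_deriv2_bound h0' hHolder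
  have contrpow : Continuous (fun t : ℝ => t ^ (r - 2)) := by
    rw [continuous_iff_continuousAt]
    exact fun x => Real.continuousAt_rpow_const x (r - 2) (Or.inr (by linarith))
  have key : ∀ a : ℝ, deriv g a = ∫ t in (0:ℝ)..a, g2 t := by
    intro a
    have := intervalIntegral.integral_eq_sub_of_hasDerivAt (f := deriv g) (f' := g2) (a := 0) (b := a)
      (fun x _ => (hg' x).hasDerivAt) (cont2.intervalIntegrable _ _)
    rw [this, h0, sub_zero]
  intro a
  rcases le_or_gt 0 a with ha | ha
  · rw [key a]
    calc |∫ t in (0:ℝ)..a, g2 t| ≤ ∫ t in (0:ℝ)..a, |g2 t| :=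
          intervalIntegral.abs_integral_le_integral_abs ha
      _ ≤ ∫ t in (0:ℝ)..a, t ^ (r - 2) := by
          refine intervalIntegral.integral_mono_on ha (cont2.abs.intervalIntegrable _ _)
            (intervalIntegral.intervalIntegrable_rpow (Or.inl (by linarith))) ?_
          intro t ht
          have := bd2 t
          rwa [abs_of_nonneg ht.1] at this
      _ = |a| ^ (r - 1) / (r - 1) := by
          rw [integral_rpow (Or.inl (by linarith))]
          rw [Real.zero_rpow (by linarith : r - 2 + 1 ≠ 0), abs_of_nonneg ha,
            (by ring : r - 2 + 1 = r - 1)]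
          norm_num
  · rw [key a, intervalIntegral.integral_symm]
    rw [abs_neg]
    calc |∫ t in a..(0:ℝ), g2 t| ≤ ∫ t in a..(0:ℝ), |g2 t| :=
          intervalIntegral.abs_integral_le_integral_abs ha.le
      _ ≤ ∫ t in a..(0:ℝ), (-t) ^ (r - 2) := by
          refine intervalIntegral.integral_mono_on ha.le (cont2.abs.intervalIntegrable _ _) ?_ ?_
          · exact (contrpow.comp continuous_neg).intervalIntegrable _ _
          · intro t ht
            have := bd2 t
            rwa [abs_of_nonpos ht.2] at this
      _ = ∫ t in (0:ℝ)..(-a), t ^ (r - 2) := by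
          have := intervalIntegral.integral_comp_neg (a := a) (b := (0:ℝ))
            (fun t : ℝ => t ^ (r - 2))
          simpa using this
      _ = |a| ^ (r - 1) / (r - 1) := by
          rw [integral_rpow (Or.inl (by linarith))]
          rw [Real.zero_rpow (by linarith : r - 2 + 1 ≠ 0), abs_of_neg ha,
            (by ring : r - 2 + 1 = r - 1)]
          norm_num

lemma pointwise_taylor {r : ℝ} (hr2 : 2 < r) {g : ℝ → ℝ} (hg : Differentiable ℝ g)
    (hg' : Differentiable ℝ (deriv g)) (h0 : deriv g 0 = 0) (h0' : deriv (deriv g) 0 = 0)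
    (hHolder : ∀ x y : ℝ, |deriv (deriv g) x - deriv (deriv g) y| ≤ |x - y| ^ (r - 2))
    (a b : ℝ) :
    |g (a + b) - g a| ≤ 1 / (r - 1) * |b| * |a| ^ (r - 1)
      + 1 / 2 * b ^ 2 * |a| ^ (r - 2) + |b| ^ r := by
  set g2 := deriv (deriv g) with hg2
  have bd2 : ∀ x : ℝ, |g2 x| ≤ |x| ^ (r - 2) := holder_deriv2_bound h0' hHolder
  have bd1 : ∀ x : ℝ, |deriv g x| ≤ |x| ^ (r - 1) / (r - 1) :=
    holder_deriv1_bound hr2 hg' h0 h0' hHolder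
  -- Step A
  have stepA : ∀ x : ℝ, |deriv g x - deriv g a - (x - a) * g2 a| ≤ |x - a| ^ (r - 1) := by
    intro x
    have h := mvt_rpow_bound (u := fun x => deriv g x - deriv g a - (x - a) * g2 a)
      (u' := fun x => g2 x - g2 a) ?_ (a := a) (by simp) (s := r - 2) (by linarith)
      (fun y => hHolder y a) x
    · have hre : r - 2 + 1 = r - 1 := by ring
      rwa [hre] at h
    · intro y
      have h1 : HasDerivAt (deriv g) (g2 y) y := (hg' y).hasDerivAt
      have h2 : HasDerivAt (fun x : ℝ => (x - a) * g2 a) (g2 a) y := by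
        simpa using ((hasDerivAt_id y).sub_const a).mul_const (g2 a)
      have h3 := (h1.sub_const (deriv g a)).sub h2
      exact h3
  -- Step B
  have stepB : |g (a + b) - g a - b * deriv g a - b ^ 2 / 2 * g2 a| ≤ |b| ^ r := by
    have h := mvt_rpow_bound
      (u := fun x => g x - g a - (x - a) * deriv g a - (x - a) ^ 2 / 2 * g2 a)
      (u' := fun x => deriv g x - deriv g a - (x - a) * g2 a) ?_ (a := a) (by simp)
      (s := r - 1) (by linarith) stepA (a + b)
    · have hre : r - 1 + 1 = r := by ring
      rw [hre] at h
      simpa using h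
    · intro y
      have h1 : HasDerivAt g (deriv g y) y := (hg y).hasDerivAt
      have h2 : HasDerivAt (fun x : ℝ => (x - a) * deriv g a) (deriv g a) y := by
        simpa using ((hasDerivAt_id y).sub_const a).mul_const (deriv g a)
      have h3 : HasDerivAt (fun x : ℝ => (x - a) ^ 2 / 2 * g2 a) ((y - a) * g2 a) y := by
        have h4 : HasDerivAt (fun x : ℝ => (x - a) ^ 2) (2 * (y - a)) y := by
          have h5 := (((hasDerivAt_id y).sub_const a).pow 2)
          simp at h5; exact h5
        have := (h4.div_const 2).mul_const (g2 a)
        convert this using 1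
        rfl
        rfl
        ring
      have h5 := ((h1.sub_const (g a)).sub h2).sub h3
      exact h5
  have key : g (a + b) - g a = (g (a + b) - g a - b * deriv g a - b ^ 2 / 2 * g2 a)
      + b * deriv g a + b ^ 2 / 2 * g2 a := by ring
  rw [key]
  have e1 : |b * deriv g a| ≤ 1 / (r - 1) * |b| * |a| ^ (r - 1) := by
    rw [abs_mul]
    calc |b| * |deriv g a| ≤ |b| * (|a| ^ (r - 1) / (r - 1)) :=
          mul_le_mul_of_nonneg_left (bd1 a) (abs_nonneg _)
      _ = 1 / (r - 1) * |b| * |a| ^ (r - 1) := by ring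
  have e2 : |b ^ 2 / 2 * g2 a| ≤ 1 / 2 * b ^ 2 * |a| ^ (r - 2) := by
    rw [abs_mul]
    have : |b ^ 2 / 2| = b ^ 2 / 2 := abs_of_nonneg (by positivity)
    rw [this]
    calc b ^ 2 / 2 * |g2 a| ≤ b ^ 2 / 2 * (|a| ^ (r - 2)) :=
          mul_le_mul_of_nonneg_left (bd2 a) (by positivity)
      _ = 1 / 2 * b ^ 2 * |a| ^ (r - 2) := by ring
  calc |g (a + b) - g a - b * deriv g a - b ^ 2 / 2 * g2 a + b * deriv g a + b ^ 2 / 2 * g2 a|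
      ≤ |g (a + b) - g a - b * deriv g a - b ^ 2 / 2 * g2 a| + |b * deriv g a|
        + |b ^ 2 / 2 * g2 a| := by
        refine (abs_add_le _ _).trans ?_
        exact add_le_add_left (abs_add_le _ _) _
    _ ≤ |b| ^ r + (1 / (r - 1) * |b| * |a| ^ (r - 1)) + (1 / 2 * b ^ 2 * |a| ^ (r - 2)) :=
        add_le_add (add_le_add stepB e1) e2
    _ = _ := by ring

lemma abs_rpow_abs (x s : ℝ) : abs (|x| ^ s) = |x| ^ s := by
  rw [Real.abs_rpow_of_nonneg (abs_nonneg x), abs_abs]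

lemma rpow_two_eq_sq (x : ℝ) : |x| ^ (2:ℝ) = x ^ 2 := by
  rw [show (2:ℝ) = ((2:ℕ):ℝ) by norm_num, Real.rpow_natCast, sq_abs]

theorem zolotarev_r_two_three_perturbation
    {Ω : Type*} [MeasurableSpace Ω] (μ : Measure Ω) [IsProbabilityMeasure μ]
    (r : ℝ) (hr2 : 2 < r) (hr3 : r ≤ 3)
    (S M R : Ω → ℝ) (hM : Measurable M) (hR : Measurable R)
    (hSMR : ∀ ω, S ω = M ω + R ω)
    (hvar : ∫ ω, (S ω) ^ 2 ∂μ = ∫ ω, (M ω) ^ 2 ∂μ)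
    (hR0 : ∫ ω, R ω ∂μ = 0)
    (hSr : MemLp S (ENNReal.ofReal r) μ)
    (hMr : MemLp M (ENNReal.ofReal r) μ)
    (hRr : MemLp R (ENNReal.ofReal r) μ)
    (g : ℝ → ℝ) (hg : Differentiable ℝ g) (hg' : Differentiable ℝ (deriv g))
    (h0 : deriv g 0 = 0) (h0' : deriv (deriv g) 0 = 0)
    (hHolder : ∀ x y : ℝ, |deriv (deriv g) x - deriv (deriv g) y| ≤ |x - y| ^ (r - 2)) :
    ∫ ω, (g (S ω) - g (M ω)) ∂μ
      ≤ (1 / (r - 1)) * (eLpNorm R (ENNReal.ofReal r) μ).toReal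
            * (eLpNorm M (ENNReal.ofReal r) μ).toReal ^ (r - 1)
        + (1 / 2) * (eLpNorm R (ENNReal.ofReal r) μ).toReal ^ 2
            * (eLpNorm M (ENNReal.ofReal r) μ).toReal ^ (r - 2)
        + (eLpNorm R (ENNReal.ofReal r) μ).toReal ^ r := by
  have hr0 : (0:ℝ) < r := by linarith
  have hr1 : (0:ℝ) < r - 1 := by linarith
  have hrm2 : (0:ℝ) < r - 2 := by linarith
  have hrne : r ≠ 0 := hr0.ne'
  have hr1ne : r - 1 ≠ 0 := hr1.ne'
  have hrm2ne : r - 2 ≠ 0 := hrm2.ne'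
  set p := ENNReal.ofReal r with hp
  have hp0 : p ≠ 0 := by
    simp only [hp, Ne, ENNReal.ofReal_eq_zero, not_le]; exact hr0
  have hptop : p ≠ ⊤ := ENNReal.ofReal_ne_top
  have hpt : p.toReal = r := ENNReal.toReal_ofReal hr0.le
  set nR := (eLpNorm R p μ).toReal with hnRdef
  set nM := (eLpNorm M p μ).toReal with hnMdef
  set IR := ∫ ω, |R ω| ^ r ∂μ with hIRdef
  set IM := ∫ ω, |M ω| ^ r ∂μ with hIMdef
  have IRnn : 0 ≤ IR := integral_nonneg fun ω => Real.rpow_nonneg (abs_nonneg _) _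
  have IMnn : 0 ≤ IM := integral_nonneg fun ω => Real.rpow_nonneg (abs_nonneg _) _
  have hnR : nR = IR ^ r⁻¹ := by
    rw [hnRdef, hRr.eLpNorm_eq_integral_rpow_norm hp0 hptop]
    simp only [hpt, Real.norm_eq_abs]
    rw [ENNReal.toReal_ofReal (Real.rpow_nonneg IRnn _)]
  have hnM : nM = IM ^ r⁻¹ := by
    rw [hnMdef, hMr.eLpNorm_eq_integral_rpow_norm hp0 hptop]
    simp only [hpt, Real.norm_eq_abs]
    rw [ENNReal.toReal_ofReal (Real.rpow_nonneg IMnn _)]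
  -- MemLp of the powers
  have hφM1 : MemLp (fun ω => |M ω| ^ (r-1)) (ENNReal.ofReal (r/(r-1))) μ := by
    have h := hMr.norm_rpow_div (ENNReal.ofReal (r-1))
    rw [ENNReal.toReal_ofReal hr1.le, hp, ← ENNReal.ofReal_div_of_pos hr1] at h
    simpa [Real.norm_eq_abs] using h
  have hφM2 : MemLp (fun ω => |M ω| ^ (r-2)) (ENNReal.ofReal (r/(r-2))) μ := by
    have h := hMr.norm_rpow_div (ENNReal.ofReal (r-2))
    rw [ENNReal.toReal_ofReal hrm2.le, hp, ← ENNReal.ofReal_div_of_pos hrm2] at h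
    simpa [Real.norm_eq_abs] using h
  have hφR2 : MemLp (fun ω => |R ω| ^ (2:ℝ)) (ENNReal.ofReal (r/2)) μ := by
    have h := hRr.norm_rpow_div (ENNReal.ofReal 2)
    rw [ENNReal.toReal_ofReal (by norm_num : (0:ℝ) ≤ 2), hp,
      ← ENNReal.ofReal_div_of_pos (by norm_num : (0:ℝ) < 2)] at h
    simpa [Real.norm_eq_abs] using h
  -- conjugate exponents
  have hpq1 : Real.HolderConjugate r (r/(r-1)) := Real.HolderConjugate.conjExponent (by linarith)
  have hpq2 : Real.HolderConjugate (r/2) (r/(r-2)) := by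
    rw [Real.holderConjugate_iff]
    constructor
    · rw [lt_div_iff₀ (by norm_num : (0:ℝ) < 2)]; linarith
    · field_simp; ring
  -- Hölder 1
  have holder1 : ∫ ω, |R ω| * |M ω| ^ (r-1) ∂μ ≤ nR * nM ^ (r-1) := by
    have h := integral_mul_norm_le_Lp_mul_Lq (μ := μ) hpq1 hRr hφM1
    simp only [Real.norm_eq_abs, abs_rpow_abs] at h
    have he1 : ∀ ω, (|M ω| ^ (r-1)) ^ (r/(r-1)) = |M ω| ^ r := by
      intro ω
      rw [← Real.rpow_mul (abs_nonneg _)]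
      congr 1
      field_simp
    simp only [he1] at h
    refine h.trans (le_of_eq ?_)
    rw [hnR, hnM, ← Real.rpow_mul IMnn, ← hIRdef, ← hIMdef]
    congr 1
    · rw [one_div]
    · congr 1
      field_simp
  -- Hölder 2
  have holder2 : ∫ ω, |R ω| ^ (2:ℝ) * |M ω| ^ (r-2) ∂μ ≤ nR ^ 2 * nM ^ (r-2) := by
    have h := integral_mul_norm_le_Lp_mul_Lq (μ := μ) hpq2 hφR2 hφM2
    simp only [Real.norm_eq_abs, abs_rpow_abs] at h
    have he1 : ∀ ω, (|M ω| ^ (r-2)) ^ (r/(r-2)) = |M ω| ^ r := by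
      intro ω
      rw [← Real.rpow_mul (abs_nonneg _)]
      congr 1
      field_simp
    have he2 : ∀ ω, (|R ω| ^ (2:ℝ)) ^ (r/2) = |R ω| ^ r := by
      intro ω
      rw [← Real.rpow_mul (abs_nonneg _)]
      congr 1
      field_simp
    simp only [he1, he2] at h
    refine h.trans (le_of_eq ?_)
    have hsq : nR ^ 2 = nR ^ (2:ℝ) := by
      rw [show (2:ℝ) = ((2:ℕ):ℝ) by norm_num, Real.rpow_natCast]
    rw [hsq, hnR, hnM, ← Real.rpow_mul IRnn, ← Real.rpow_mul IMnn, ← hIRdef, ← hIMdef]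
    congr 1
    · congr 1
      field_simp
    · congr 1
      field_simp
  -- third term
  have hterm3 : IR = nR ^ r := by
    rw [hnR, ← Real.rpow_mul IRnn, inv_mul_cancel₀ hrne, Real.rpow_one]
  -- integrability
  have int3 : Integrable (fun ω => |R ω| ^ r) μ := by
    have h := hRr.norm_rpow hp0 hptop
    rw [hpt] at h
    have := memLp_one_iff_integrable.mp h
    simpa [Real.norm_eq_abs] using this
  have harm1 : (1:ENNReal)/1 = 1/ENNReal.ofReal (r/(r-1)) + 1/p := by
    rw [hp, one_div, one_div, one_div, ← ENNReal.ofReal_inv_of_pos (by positivity),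
      ← ENNReal.ofReal_inv_of_pos hr0, ← ENNReal.ofReal_add (by positivity) (by positivity),
      show (r/(r-1))⁻¹ + r⁻¹ = 1 by field_simp; ring]
    simp
  have int1 : Integrable (fun ω => |R ω| * |M ω| ^ (r-1)) μ := by
    have h := memLp_one_iff_integrable.mp (MemLp.smul (𝕜 := ℝ) (hpqr := ⟨by simpa [one_div] using harm1.symm⟩) hRr hφM1)
    have h2 := h.abs
    refine h2.congr (Filter.Eventually.of_forall fun ω => ?_)
    simp only [Pi.smul_apply', Pi.smul_apply, smul_eq_mul]
    rw [abs_mul, abs_rpow_abs]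
    ring
  have harm2 : (1:ENNReal)/1 = 1/ENNReal.ofReal (r/(r-2)) + 1/ENNReal.ofReal (r/2) := by
    rw [one_div, one_div, one_div, ← ENNReal.ofReal_inv_of_pos (by positivity),
      ← ENNReal.ofReal_inv_of_pos (by positivity), ← ENNReal.ofReal_add (by positivity) (by positivity),
      show (r/(r-2))⁻¹ + (r/2)⁻¹ = 1 by field_simp; ring]
    simp
  have int2 : Integrable (fun ω => |R ω| ^ (2:ℝ) * |M ω| ^ (r-2)) μ := by
    have h := memLp_one_iff_integrable.mp (MemLp.smul (𝕜 := ℝ) (hpqr := ⟨by simpa [one_div] using harm2.symm⟩) hφR2 hφM2)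
    refine h.congr (Filter.Eventually.of_forall fun ω => ?_)
    simp only [Pi.smul_apply', Pi.smul_apply, smul_eq_mul]
    ring
  -- the dominating function
  set F : Ω → ℝ := fun ω => 1/(r-1) * (|R ω| * |M ω| ^ (r-1))
      + 1/2 * (|R ω| ^ (2:ℝ) * |M ω| ^ (r-2)) + |R ω| ^ r with hFdef
  have intF : Integrable F μ := ((int1.const_mul _).add (int2.const_mul _)).add int3
  have hpt_bound : ∀ ω, |g (S ω) - g (M ω)| ≤ F ω := by
    intro ω
    rw [hSMR ω]
    have h := pointwise_taylor hr2 hg hg' h0 h0' hHolder (M ω) (R ω)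
    refine h.trans (le_of_eq ?_)
    rw [hFdef]
    simp only
    rw [rpow_two_eq_sq]
    ring
  have hSmeas : Measurable S := by
    have : S = fun ω => M ω + R ω := funext hSMR
    rw [this]; exact hM.add hR
  have hmeas : AEStronglyMeasurable (fun ω => g (S ω) - g (M ω)) μ :=
    ((hg.continuous.measurable.comp hSmeas).sub (hg.continuous.measurable.comp hM)).aestronglyMeasurable
  have intLHS : Integrable (fun ω => g (S ω) - g (M ω)) μ := by
    refine Integrable.mono' intF hmeas (Filter.Eventually.of_forall fun ω => ?_)
    rw [Real.norm_eq_abs]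
    exact hpt_bound ω
  have step1 : ∫ ω, (g (S ω) - g (M ω)) ∂μ ≤ ∫ ω, F ω ∂μ :=
    integral_mono intLHS intF fun ω => (le_abs_self _).trans (hpt_bound ω)
  have step2 : ∫ ω, F ω ∂μ = 1/(r-1) * ∫ ω, |R ω| * |M ω| ^ (r-1) ∂μ
      + 1/2 * ∫ ω, |R ω| ^ (2:ℝ) * |M ω| ^ (r-2) ∂μ + IR := by
    have intA : Integrable (fun ω => 1/(r-1) * (|R ω| * |M ω| ^ (r-1))
        + 1/2 * (|R ω| ^ (2:ℝ) * |M ω| ^ (r-2))) μ := (int1.const_mul _).add (int2.const_mul _)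
    simp only [hFdef]
    rw [integral_add intA int3, integral_add (int1.const_mul (1/(r-1))) (int2.const_mul (1/2)),
      MeasureTheory.integral_const_mul, MeasureTheory.integral_const_mul, ← hIRdef]
  refine step1.trans ?_
  rw [step2, hterm3]
  have b1 : 1/(r-1) * ∫ ω, |R ω| * |M ω| ^ (r-1) ∂μ ≤ 1/(r-1) * (nR * nM ^ (r-1)) :=
    mul_le_mul_of_nonneg_left holder1 (by positivity)
  have b2 : 1/2 * ∫ ω, |R ω| ^ (2:ℝ) * |M ω| ^ (r-2) ∂μ ≤ 1/2 * (nR ^ 2 * nM ^ (r-2)) :=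
    mul_le_mul_of_nonneg_left holder2 (by norm_num)
  calc 1/(r-1) * ∫ ω, |R ω| * |M ω| ^ (r-1) ∂μ
      + 1/2 * ∫ ω, |R ω| ^ (2:ℝ) * |M ω| ^ (r-2) ∂μ + nR ^ r
      ≤ 1/(r-1) * (nR * nM ^ (r-1)) + 1/2 * (nR ^ 2 * nM ^ (r-2)) + nR ^ r := by
        exact add_le_add (add_le_add b1 b2) le_rfl
    _ = 1/(r-1) * nR * nM ^ (r-1) + 1/2 * nR ^ 2 * nM ^ (r-2) + nR ^ r := by ring
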